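/- Two-sided power bounds for the Zamani weight sequence: let T ≥ 2 be a fixed integer and φ ∈ (0,1], and define (α_t)_{t=−1}^{T−1} by α_{−1} = 1 and α_t = ((T−t+1)/(T−t+φ)) · α_{t−1} for t = 0, …, T−1. Then for every t with 0 ≤ t ≤ T−1, ((T+1)/(T−t+1))^{1−φ} ≤ α_t ≤ ((T+2)/(T−t))^{1−φ}. -/

import Mathlib

open Real

private lemma zw_lower_step (φ : ℝ) (hφ0 : 0 < φ) (hφ1 : φ ≤ 1) {x : ℝ} (hx : 1 ≤ x) :
    ((x + 2) / (x + 1)) ^ (1 - φ) ≤ (x + 1) / (x + φ) := by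
  have hx1 : (0:ℝ) < x + 1 := by linarith
  have hxφ : (0:ℝ) < x + φ := by linarith
  have h1 : (x + 2) / (x + 1) = 1 + 1 / (x + 1) := by field_simp; ring
  have hb : (1 + 1 / (x + 1)) ^ (1 - φ) ≤ 1 + (1 - φ) * (1 / (x + 1)) :=
    rpow_one_add_le_one_add_mul_self (by nlinarith [one_div_pos.mpr hx1]) (by linarith) (by linarith)
  rw [h1]
  refine hb.trans ?_
  have h2 : 1 + (1 - φ) * (1 / (x + 1)) = (x + 2 - φ) / (x + 1) := by field_simp; ring
  rw [h2, div_le_div_iff₀ hx1 hxφ]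
  nlinarith [sq_nonneg (1 - φ)]

private lemma zw_upper_step (φ : ℝ) (hφ0 : 0 < φ) (hφ1 : φ ≤ 1) {x : ℝ} (hx : 1 ≤ x) :
    (x + 1) / (x + φ) ≤ ((x + 1) / x) ^ (1 - φ) := by
  have hx0 : (0:ℝ) < x := by linarith
  have hx1 : (0:ℝ) < x + 1 := by linarith
  have hxφ : (0:ℝ) < x + φ := by linarith
  have key : (x / (x + 1)) ^ (1 - φ) ≤ (x + φ) / (x + 1) := by
    have h1 : x / (x + 1) = 1 + (-(1 / (x + 1))) := by field_simp; ring
    have hb : (1 + (-(1 / (x + 1)))) ^ (1 - φ) ≤ 1 + (1 - φ) * (-(1 / (x + 1))) :=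
      rpow_one_add_le_one_add_mul_self (by
        have : 1 / (x + 1) ≤ 1 := by rw [div_le_one hx1]; linarith
        linarith) (by linarith) (by linarith)
    rw [h1]
    refine hb.trans (le_of_eq ?_)
    field_simp
    ring
  have hinv : ((x + 1) / x) ^ (1 - φ) = ((x / (x + 1)) ^ (1 - φ))⁻¹ := by
    rw [← Real.inv_rpow (by positivity), inv_div]
  rw [hinv, le_inv_comm₀ (by positivity) (by positivity)]
  calc ((x / (x + 1)) ^ (1 - φ)) ≤ (x + φ) / (x + 1) := key
    _ = ((x + 1) / (x + φ))⁻¹ := by rw [inv_div]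

/-- Two-sided power bounds for the Zamani weight sequence.
Here `α (t+1)` plays the role of `α_t` in the paper (and `α 0 = 1` is `α_{-1}`), so
for `0 ≤ t ≤ T-1`, `((T+1)/(T-t+1))^{1-φ} ≤ α_t ≤ ((T+2)/(T-t))^{1-φ}`. -/
theorem zamani_weights_two_sided_bounds
    (T : ℕ) (hT : 2 ≤ T) (φ : ℝ) (hφ0 : 0 < φ) (hφ1 : φ ≤ 1)
    (α : ℕ → ℝ) (hα0 : α 0 = 1)
    (hαrec : ∀ t < T, α (t + 1) = (((T : ℝ) - t + 1) / ((T : ℝ) - t + φ)) * α t) :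
    ∀ t < T,
      (((T : ℝ) + 1) / ((T : ℝ) - t + 1)) ^ (1 - φ) ≤ α (t + 1) ∧
        α (t + 1) ≤ (((T : ℝ) + 2) / ((T : ℝ) - t)) ^ (1 - φ) := by
  have hT1 : (1:ℝ) ≤ (T:ℝ) := by exact_mod_cast (by omega : 1 ≤ T)
  intro t ht
  induction t with
  | zero =>
    have hrec := hαrec 0 (by omega)
    simp only [Nat.cast_zero, sub_zero, hα0, mul_one] at hrec
    constructor
    · rw [Nat.cast_zero, sub_zero, div_self (by linarith), Real.one_rpow, hrec]
      rw [le_div_iff₀ (by linarith)]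
      linarith
    · rw [Nat.cast_zero, sub_zero, hrec]
      calc ((T:ℝ) + 1) / ((T:ℝ) + φ) ≤ (((T:ℝ) + 1) / (T:ℝ)) ^ (1 - φ) :=
            zw_upper_step φ hφ0 hφ1 hT1
        _ ≤ (((T:ℝ) + 2) / (T:ℝ)) ^ (1 - φ) := by
            apply Real.rpow_le_rpow (by positivity) _ (by linarith)
            gcongr
            linarith
  | succ t ih =>
    have ht' : t < T := by omega
    have ih' := ih ht'
    have hcast : ((t + 1 : ℕ) : ℝ) = (t:ℝ) + 1 := by push_cast; ring
    have hx : (1:ℝ) ≤ (T:ℝ) - ((t:ℝ) + 1) := by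
      have h2 : (t:ℕ) + 2 ≤ T := by omega
      have := (Nat.cast_le (α := ℝ)).mpr h2
      push_cast at this
      linarith
    set x : ℝ := (T:ℝ) - ((t:ℝ) + 1) with hxdef
    have hx0 : (0:ℝ) < x := by linarith
    have hrec := hαrec (t + 1) ht
    rw [hcast] at hrec
    have hrec' : α (t + 1 + 1) = ((x + 1) / (x + φ)) * α (t + 1) := by
      rw [hrec, hxdef]
    have hTt : (T:ℝ) - (t:ℝ) = x + 1 := by rw [hxdef]; ring
    have hlo := ih'.1
    have hhi := ih'.2
    rw [hTt] at hlo hhi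
    have hαpos : 0 < α (t + 1) := by
      have : (0:ℝ) < (((T:ℝ) + 1) / (x + 1 + 1)) ^ (1 - φ) := by positivity
      linarith [hlo]
    have hlo' : (((T:ℝ) + 1) / (x + 2)) ^ (1 - φ) ≤ α (t + 1) := by
      rw [show x + 2 = x + 1 + 1 by ring]; exact hlo
    constructor
    · -- lower bound
      rw [hcast, ← hxdef, hrec']
      have hsplit : ((T:ℝ) + 1) / (x + 1) = (((T:ℝ) + 1) / (x + 2)) * ((x + 2) / (x + 1)) := by
        field_simp
      rw [hsplit, Real.mul_rpow (by positivity) (by positivity)]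
      calc (((T:ℝ) + 1) / (x + 2)) ^ (1 - φ) * ((x + 2) / (x + 1)) ^ (1 - φ)
          ≤ α (t + 1) * ((x + 1) / (x + φ)) :=
            mul_le_mul hlo' (zw_lower_step φ hφ0 hφ1 hx) (by positivity) (le_of_lt hαpos)
        _ = ((x + 1) / (x + φ)) * α (t + 1) := by ring
    · -- upper bound
      rw [hcast, ← hxdef, hrec']
      have hsplit : ((T:ℝ) + 2) / x = (((T:ℝ) + 2) / (x + 1)) * ((x + 1) / x) := by
        field_simp
      rw [hsplit, Real.mul_rpow (by positivity) (by positivity)]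
      calc ((x + 1) / (x + φ)) * α (t + 1)
          ≤ ((x + 1) / x) ^ (1 - φ) * (((T:ℝ) + 2) / (x + 1)) ^ (1 - φ) :=
            mul_le_mul (zw_upper_step φ hφ0 hφ1 hx) hhi (le_of_lt hαpos) (by positivity)
        _ = (((T:ℝ) + 2) / (x + 1)) ^ (1 - φ) * ((x + 1) / x) ^ (1 - φ) := by ring
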